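/- Let M₁, M₂, J₁, J₂, R₁, R₂ be nonempty finite types; set M := M₁ × M₂ (size m := |M|), J := J₁ × J₂ (size n := |J|), and let β : J → Fin B be a surjective block labeling with block sizes n_α := |β⁻¹(α)| ≥ 1 and diagonal projections P_α ∈ Matrix(J, J, ℂ). For A ∈ Matrix((M×J)×(R₁×R₂), (M×J)×(R₁×R₂), ℂ) define the channel C[A] := Σ_{α} (1/(m·n_α)) · ( (I_M ⊗ P_α) ⊗ Tr_{M×J}[ (I_M ⊗ P_α ⊗ I)·A·(I_M ⊗ P_α ⊗ I) ] ) (full depolarisation on M and block depolarisation on J). Then ‖ Tr_{M₁×J₁×R₁}( C[A] ) ‖_F ≤ ( √( n·|J₁| ) / √|M₂| ) · ( Σ_{α} 1/√(n_α) ) · ‖ Tr_{M×R₁} A ‖_F, where Tr_{M₁×J₁×R₁} and Tr_{M×R₁} denote partial traces over the indicated tensor factors and ‖·‖_F is the Frobenius norm. -/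

import Mathlib

open Finset Matrix
open scoped Kronecker

/-- The Frobenius norm `‖M‖_F = √(Σ_{i,j} |M_{ij}|²)` of a complex matrix. -/
noncomputable def frobeniusNorm {n m : Type*} [Fintype n] [Fintype m]
    (M : Matrix n m ℂ) : ℝ :=
  Real.sqrt (∑ i, ∑ j, ‖M i j‖ ^ 2)

/-- Partial trace over the first tensor factor:
`(Tr_N M)(r, r') = Σ_n M((n,r), (n,r'))`. -/
noncomputable def ptraceN {N R : Type*} [Fintype N]
    (A : Matrix (N × R) (N × R) ℂ) : Matrix R R ℂ :=
  Matrix.of fun r r' => ∑ n, A (n, r) (n, r')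

/-- Partial trace over the `M₁`, `J₁` and `R₁` tensor factors of a matrix indexed by
`((M₁ × M₂) × (J₁ × J₂)) × (R₁ × R₂)`. -/
noncomputable def ptraceM1J1R1 {M₁ M₂ J₁ J₂ R₁ R₂ : Type*}
    [Fintype M₁] [Fintype J₁] [Fintype R₁]
    (A : Matrix (((M₁ × M₂) × (J₁ × J₂)) × (R₁ × R₂))
                (((M₁ × M₂) × (J₁ × J₂)) × (R₁ × R₂)) ℂ) :
    Matrix ((M₂ × J₂) × R₂) ((M₂ × J₂) × R₂) ℂ :=
  Matrix.of fun p q => ∑ a : M₁, ∑ b : J₁, ∑ c : R₁,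
    A (((a, p.1.1), (b, p.1.2)), (c, p.2)) (((a, q.1.1), (b, q.1.2)), (c, q.2))

/-- Partial trace over the `M = M₁ × M₂` and `R₁` tensor factors of a matrix indexed by
`((M₁ × M₂) × (J₁ × J₂)) × (R₁ × R₂)`. -/
noncomputable def ptraceMR1 {M₁ M₂ J₁ J₂ R₁ R₂ : Type*}
    [Fintype M₁] [Fintype M₂] [Fintype R₁]
    (A : Matrix (((M₁ × M₂) × (J₁ × J₂)) × (R₁ × R₂))
                (((M₁ × M₂) × (J₁ × J₂)) × (R₁ × R₂)) ℂ) :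
    Matrix ((J₁ × J₂) × R₂) ((J₁ × J₂) × R₂) ℂ :=
  Matrix.of fun p q => ∑ a : M₁ × M₂, ∑ c : R₁,
    A ((a, p.1), (c, p.2)) ((a, q.1), (c, q.2))

/-- The squared norm of a euclidean vector is the sum of squares of the absolute
values of its entries. -/
lemma aux_normsq {ι : Type*} [Fintype ι] (x : EuclideanSpace ℂ ι) :
    ‖x‖ ^ 2 = ∑ p : ι, ‖x p‖ ^ 2 := by
  rw [EuclideanSpace.norm_eq, Real.sq_sqrt (Finset.sum_nonneg fun _ _ => sq_nonneg _)]

set_option maxHeartbeats 2000000 in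
/-- The diagonal (in the first index) part of the Frobenius norm squared is bounded by the
whole Frobenius norm squared. -/
lemma aux_sum_diag_le {J R₂ : Type*} [Fintype J] [Fintype R₂]
    (F : Matrix (J × R₂) (J × R₂) ℂ) (s : Finset J) :
    ∑ j ∈ s, ∑ p : R₂ × R₂, ‖F ((j, p.1)) ((j, p.2))‖ ^ 2
      ≤ frobeniusNorm F ^ 2 := by
  have h0 : ∀ (j : J) (p : R₂ × R₂), (0:ℝ) ≤ ‖F ((j, p.1)) ((j, p.2))‖ ^ 2 :=
    fun _ _ => sq_nonneg _
  have hle1 : ∑ j ∈ s, ∑ p : R₂ × R₂, ‖F ((j, p.1)) ((j, p.2))‖ ^ 2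
      ≤ ∑ j : J, ∑ p : R₂ × R₂, ‖F ((j, p.1)) ((j, p.2))‖ ^ 2 :=
    Finset.sum_le_sum_of_subset_of_nonneg (Finset.subset_univ s)
      (fun j _ _ => Finset.sum_nonneg fun p _ => h0 j p)
  have hFsq : frobeniusNorm F ^ 2
      = ∑ i : J × R₂, ∑ i' : J × R₂, ‖F i i'‖ ^ 2 := by
    rw [frobeniusNorm, Real.sq_sqrt (Finset.sum_nonneg fun _ _ =>
      Finset.sum_nonneg fun _ _ => sq_nonneg _)]
  have hle2 : ∑ j : J, ∑ p : R₂ × R₂, ‖F ((j, p.1)) ((j, p.2))‖ ^ 2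
      ≤ ∑ i : J × R₂, ∑ i' : J × R₂, ‖F i i'‖ ^ 2 := by
    simp only [Fintype.sum_prod_type]
    refine Finset.sum_le_sum fun j _ => Finset.sum_le_sum fun r _ => ?_
    exact Finset.single_le_sum
      (f := fun j' : J => ∑ r' : R₂, ‖F ((j, r)) ((j', r'))‖ ^ 2)
      (fun j' _ => Finset.sum_nonneg fun r' _ => sq_nonneg _) (Finset.mem_univ j)
  calc _ ≤ _ := hle1
    _ ≤ _ := hle2
    _ = _ := hFsq.symm

/-- Cauchy–Schwarz step: the norm of a sum of vectors is at most `√(#s)` times the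
square root of the sum of the squared norms. -/
lemma aux_norm_sum_le {ι κ : Type*} [Fintype κ] (s : Finset ι)
    (u : ι → EuclideanSpace ℂ κ) (fn : ℝ) (hfn : 0 ≤ fn)
    (h : ∑ j ∈ s, ‖u j‖ ^ 2 ≤ fn ^ 2) :
    ‖∑ j ∈ s, u j‖ ≤ Real.sqrt s.card * fn := by
  calc ‖∑ j ∈ s, u j‖ ≤ ∑ j ∈ s, ‖u j‖ := norm_sum_le _ _
    _ = ∑ j ∈ s, 1 * ‖u j‖ := by simp
    _ ≤ Real.sqrt (∑ j ∈ s, 1 ^ 2) * Real.sqrt (∑ j ∈ s, ‖u j‖ ^ 2) :=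
        Real.sum_mul_le_sqrt_mul_sqrt _ _ _
    _ ≤ Real.sqrt s.card * fn := by
        refine mul_le_mul ?_ ?_ (Real.sqrt_nonneg _) (Real.sqrt_nonneg _)
        · simp
        · calc Real.sqrt (∑ j ∈ s, ‖u j‖ ^ 2) ≤ Real.sqrt (fn ^ 2) := Real.sqrt_le_sqrt h
            _ = fn := Real.sqrt_sq hfn

set_option maxHeartbeats 1000000 in
/-- Frobenius norm of a matrix which is block diagonal in the `M₂ × J₂` factor and
whose diagonal blocks depend only on `j₂`. -/
lemma aux_frob_blockdiag {M₂ J₂ R₂ : Type*} [Fintype M₂] [Fintype J₂] [Fintype R₂]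
    [DecidableEq M₂] [DecidableEq J₂]
    (G : Matrix ((M₂ × J₂) × R₂) ((M₂ × J₂) × R₂) ℂ)
    (φ : J₂ → R₂ → R₂ → ℂ)
    (hG : ∀ (m₂ m₂' : M₂) (j₂ j₂' : J₂) (r r' : R₂),
      G ((m₂, j₂), r) ((m₂', j₂'), r') = if m₂ = m₂' ∧ j₂ = j₂' then φ j₂ r r' else 0)
    (Cb : ℝ) (hCb : 0 ≤ Cb)
    (hφ : ∀ j₂, ∑ r : R₂, ∑ r' : R₂, ‖φ j₂ r r'‖ ^ 2 ≤ Cb ^ 2) :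
    frobeniusNorm G ≤
      Real.sqrt (Fintype.card M₂) * Real.sqrt (Fintype.card J₂) * Cb := by
  rw [frobeniusNorm]
  have hsum : (∑ p : (M₂ × J₂) × R₂, ∑ q : (M₂ × J₂) × R₂, ‖G p q‖ ^ 2)
      = ∑ m₂ : M₂, ∑ j₂ : J₂, ∑ r : R₂, ∑ r' : R₂, ‖φ j₂ r r'‖ ^ 2 := by
    simp only [Fintype.sum_prod_type]
    refine Finset.sum_congr rfl fun m₂ _ => Finset.sum_congr rfl fun j₂ _ =>
      Finset.sum_congr rfl fun r _ => ?_
    simp only [hG]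
    simp only [apply_ite (‖·‖), norm_zero, ite_pow, zero_pow (two_ne_zero), ite_and]
    simp only [Finset.sum_ite_irrel, Finset.sum_const_zero, Finset.sum_ite_eq,
      Finset.mem_univ, if_true]
  rw [hsum]
  have hb : (∑ m₂ : M₂, ∑ j₂ : J₂, ∑ r : R₂, ∑ r' : R₂, ‖φ j₂ r r'‖ ^ 2)
      ≤ (Fintype.card M₂ : ℝ) * ((Fintype.card J₂ : ℝ) * Cb ^ 2) := by
    calc (∑ m₂ : M₂, ∑ j₂ : J₂, ∑ r : R₂, ∑ r' : R₂, ‖φ j₂ r r'‖ ^ 2)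
        ≤ ∑ _m₂ : M₂, ∑ _j₂ : J₂, Cb ^ 2 :=
          Finset.sum_le_sum fun m₂ _ => Finset.sum_le_sum fun j₂ _ => hφ j₂
      _ = (Fintype.card M₂ : ℝ) * ((Fintype.card J₂ : ℝ) * Cb ^ 2) := by
          simp [Finset.sum_const, card_univ, nsmul_eq_mul]
  calc Real.sqrt (∑ m₂ : M₂, ∑ j₂ : J₂, ∑ r : R₂, ∑ r' : R₂, ‖φ j₂ r r'‖ ^ 2)
      ≤ Real.sqrt ((Fintype.card M₂ : ℝ) * ((Fintype.card J₂ : ℝ) * Cb ^ 2)) :=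
        Real.sqrt_le_sqrt hb
    _ = Real.sqrt (Fintype.card M₂) * Real.sqrt (Fintype.card J₂) * Cb := by
        rw [Real.sqrt_mul (by exact_mod_cast Nat.zero_le _),
          Real.sqrt_mul (by exact_mod_cast Nat.zero_le _), Real.sqrt_sq hCb, mul_assoc]

set_option maxHeartbeats 4000000 in
/-- **Frobenius-norm bound for the block-depolarising channel.**
For the channel `C[A]` which fully depolarises the factor `M = M₁ × M₂` and
block-depolarises the factor `J = J₁ × J₂` along the blocks `β⁻¹(α)`, the Frobenius
norm of the partial trace of `C[A]` over `M₁ × J₁ × R₁` is bounded by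
`(√(n·|J₁|)/√|M₂|)·(Σ_α 1/√n_α)·‖Tr_{M×R₁} A‖_F`. -/
theorem block_depolarising_channel_bound
    {M₁ M₂ J₁ J₂ R₁ R₂ : Type*}
    [Fintype M₁] [Fintype M₂] [Fintype J₁] [Fintype J₂] [Fintype R₁] [Fintype R₂]
    [DecidableEq M₁] [DecidableEq M₂] [DecidableEq J₁] [DecidableEq J₂] [DecidableEq R₁] [DecidableEq R₂]
    [Nonempty M₁] [Nonempty M₂] [Nonempty J₁] [Nonempty J₂] [Nonempty R₁] [Nonempty R₂]
    {B : ℕ} (hB : 1 ≤ B) (β : J₁ × J₂ → Fin B) (hβ : Function.Surjective β)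
    (P : Fin B → Matrix (J₁ × J₂) (J₁ × J₂) ℂ)
    (hP : ∀ α, P α = Matrix.diagonal fun j => if β j = α then 1 else 0)
    (A CA : Matrix (((M₁ × M₂) × (J₁ × J₂)) × (R₁ × R₂))
                   (((M₁ × M₂) × (J₁ × J₂)) × (R₁ × R₂)) ℂ)
    (hCA : CA = ∑ α : Fin B,
      (((Fintype.card (M₁ × M₂) : ℂ)) * (Fintype.card {j : J₁ × J₂ // β j = α} : ℂ))⁻¹ •
        (((1 : Matrix (M₁ × M₂) (M₁ × M₂) ℂ) ⊗ₖ P α) ⊗ₖ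
          ptraceN ((((1 : Matrix (M₁ × M₂) (M₁ × M₂) ℂ) ⊗ₖ P α) ⊗ₖ
              (1 : Matrix (R₁ × R₂) (R₁ × R₂) ℂ)) * A *
            (((1 : Matrix (M₁ × M₂) (M₁ × M₂) ℂ) ⊗ₖ P α) ⊗ₖ
              (1 : Matrix (R₁ × R₂) (R₁ × R₂) ℂ))))) :
    frobeniusNorm (ptraceM1J1R1 CA) ≤
      (Real.sqrt ((Fintype.card (J₁ × J₂) : ℝ) * (Fintype.card J₁ : ℝ)) /
          Real.sqrt (Fintype.card M₂ : ℝ)) *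
        (∑ α : Fin B, 1 / Real.sqrt (Fintype.card {j : J₁ × J₂ // β j = α} : ℝ)) *
        frobeniusNorm (ptraceMR1 A) := by
  classical
  -- ## Part 1: entrywise formula for the partial trace of the channel output
  have h1 : ∀ α : Fin B, ((1 : Matrix (M₁ × M₂) (M₁ × M₂) ℂ) ⊗ₖ P α)
      = Matrix.diagonal (fun aj : (M₁ × M₂) × (J₁ × J₂) => if β aj.2 = α then 1 else 0) := by
    intro α
    rw [hP, ← Matrix.diagonal_one, Matrix.diagonal_kronecker_diagonal]
    simp
  have h2 : ∀ α : Fin B, (((1 : Matrix (M₁ × M₂) (M₁ × M₂) ℂ) ⊗ₖ P α) ⊗ₖ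
        (1 : Matrix (R₁ × R₂) (R₁ × R₂) ℂ))
      = Matrix.diagonal (fun x : ((M₁ × M₂) × (J₁ × J₂)) × (R₁ × R₂) =>
          if β x.1.2 = α then 1 else 0) := by
    intro α
    rw [h1, ← Matrix.diagonal_one, Matrix.diagonal_kronecker_diagonal]
    simp
  have hT : ∀ (α : Fin B) (rc rc' : R₁ × R₂),
      ptraceN ((((1 : Matrix (M₁ × M₂) (M₁ × M₂) ℂ) ⊗ₖ P α) ⊗ₖ
          (1 : Matrix (R₁ × R₂) (R₁ × R₂) ℂ)) * A *
        (((1 : Matrix (M₁ × M₂) (M₁ × M₂) ℂ) ⊗ₖ P α) ⊗ₖ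
          (1 : Matrix (R₁ × R₂) (R₁ × R₂) ℂ))) rc rc'
      = ∑ aj : (M₁ × M₂) × (J₁ × J₂), if β aj.2 = α then A (aj, rc) (aj, rc') else 0 := by
    intro α rc rc'
    rw [h2]
    simp only [ptraceN, Matrix.of_apply, Matrix.diagonal_mul, Matrix.mul_diagonal]
    refine Finset.sum_congr rfl fun aj _ => ?_
    split_ifs <;> simp
  have hCAapp : ∀ (a : M₁ × M₂) (j : J₁ × J₂) (rc rc' : R₁ × R₂) (a' : M₁ × M₂) (j' : J₁ × J₂),
      CA ((a, j), rc) ((a', j'), rc')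
        = ∑ α : Fin B,
            ((Fintype.card (M₁ × M₂) : ℂ) * (Fintype.card {j : J₁ × J₂ // β j = α} : ℂ))⁻¹ *
              ((if (a, j) = (a', j') then (if β j = α then (1:ℂ) else 0) else 0) *
                ∑ aj : (M₁ × M₂) × (J₁ × J₂), if β aj.2 = α then A (aj, rc) (aj, rc') else 0) := by
    intro a j rc rc' a' j'
    rw [hCA]
    rw [Matrix.sum_apply]
    refine Finset.sum_congr rfl fun α _ => ?_
    rw [Matrix.smul_apply, smul_eq_mul]
    congr 1
    rw [Matrix.kroneckerMap_apply, hT, h1, Matrix.diagonal_apply]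
  set S : Fin B → R₂ → R₂ → ℂ := fun α r r' =>
    ∑ j : J₁ × J₂, if β j = α then ptraceMR1 A ((j, r)) ((j, r')) else 0 with hSdef
  set w : Fin B → J₂ → ℝ := fun α j₂ =>
    ((Fintype.card (M₁ × M₂) : ℝ) * (Fintype.card {j : J₁ × J₂ // β j = α} : ℝ))⁻¹ *
      (Fintype.card M₁ : ℝ) *
      ((Finset.univ.filter fun b₁ : J₁ => β (b₁, j₂) = α).card : ℝ) with hwdef
  have hG : ∀ (m₂ m₂' : M₂) (j₂ j₂' : J₂) (r₂ r₂' : R₂),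
      ptraceM1J1R1 CA ((m₂, j₂), r₂) ((m₂', j₂'), r₂') =
        if m₂ = m₂' ∧ j₂ = j₂' then
          ∑ α : Fin B, ((w α j₂ : ℝ) : ℂ) * S α r₂ r₂' else 0 := by
    intro m₂ m₂' j₂ j₂' r₂ r₂'
    simp only [ptraceM1J1R1, Matrix.of_apply]
    simp only [hCAapp]
    by_cases hm : m₂ = m₂'
    · by_cases hj : j₂ = j₂'
      · subst hm; subst hj
        rw [if_pos ⟨rfl, rfl⟩]
        have hbody : ∀ (a₁ : M₁) (b₁ : J₁) (c₁ : R₁) (α : Fin B),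
            ((Fintype.card (M₁ × M₂) : ℂ) * (Fintype.card {j : J₁ × J₂ // β j = α} : ℂ))⁻¹ *
              ((if ((a₁, m₂), (b₁, j₂)) = ((a₁, m₂), (b₁, j₂)) then
                  (if β (b₁, j₂) = α then (1:ℂ) else 0) else 0) *
                ∑ aj : (M₁ × M₂) × (J₁ × J₂),
                  if β aj.2 = α then A (aj, (c₁, r₂)) (aj, (c₁, r₂')) else 0)
            = ((Fintype.card (M₁ × M₂) : ℂ) * (Fintype.card {j : J₁ × J₂ // β j = α} : ℂ))⁻¹ *
              ((if β (b₁, j₂) = α then (1:ℂ) else 0) *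
                ∑ aj : (M₁ × M₂) × (J₁ × J₂),
                  if β aj.2 = α then A (aj, (c₁, r₂)) (aj, (c₁, r₂')) else 0) := by
          intro a₁ b₁ c₁ α
          rw [if_pos rfl]
        simp only [hbody]
        calc (∑ a₁ : M₁, ∑ b₁ : J₁, ∑ c₁ : R₁, ∑ α : Fin B,
              ((Fintype.card (M₁ × M₂) : ℂ) * (Fintype.card {j : J₁ × J₂ // β j = α} : ℂ))⁻¹ *
                ((if β (b₁, j₂) = α then (1:ℂ) else 0) *
                  ∑ aj : (M₁ × M₂) × (J₁ × J₂),
                    if β aj.2 = α then A (aj, (c₁, r₂)) (aj, (c₁, r₂')) else 0))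
            = ∑ α : Fin B, ∑ a₁ : M₁, ∑ b₁ : J₁, ∑ c₁ : R₁,
              ((Fintype.card (M₁ × M₂) : ℂ) * (Fintype.card {j : J₁ × J₂ // β j = α} : ℂ))⁻¹ *
                ((if β (b₁, j₂) = α then (1:ℂ) else 0) *
                  ∑ aj : (M₁ × M₂) × (J₁ × J₂),
                    if β aj.2 = α then A (aj, (c₁, r₂)) (aj, (c₁, r₂')) else 0) := by
              rw [show (∑ a₁ : M₁, ∑ b₁ : J₁, ∑ c₁ : R₁, ∑ α : Fin B,
                  ((Fintype.card (M₁ × M₂) : ℂ) *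
                      (Fintype.card {j : J₁ × J₂ // β j = α} : ℂ))⁻¹ *
                    ((if β (b₁, j₂) = α then (1:ℂ) else 0) *
                      ∑ aj : (M₁ × M₂) × (J₁ × J₂),
                        if β aj.2 = α then A (aj, (c₁, r₂)) (aj, (c₁, r₂')) else 0))
                  = ∑ a₁ : M₁, ∑ α : Fin B, ∑ b₁ : J₁, ∑ c₁ : R₁,
                  ((Fintype.card (M₁ × M₂) : ℂ) *
                      (Fintype.card {j : J₁ × J₂ // β j = α} : ℂ))⁻¹ *
                    ((if β (b₁, j₂) = α then (1:ℂ) else 0) *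
                      ∑ aj : (M₁ × M₂) × (J₁ × J₂),
                        if β aj.2 = α then A (aj, (c₁, r₂)) (aj, (c₁, r₂')) else 0) from
                Finset.sum_congr rfl fun a₁ _ =>
                  (Finset.sum_congr rfl fun b₁ _ => Finset.sum_comm).trans Finset.sum_comm]
              exact Finset.sum_comm
          _ = ∑ α : Fin B, ((w α j₂ : ℝ) : ℂ) * S α r₂ r₂' := by
              refine Finset.sum_congr rfl fun α _ => ?_
              have hS : (∑ c₁ : R₁, ∑ aj : (M₁ × M₂) × (J₁ × J₂),
                    if β aj.2 = α then A (aj, (c₁, r₂)) (aj, (c₁, r₂')) else 0)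
                  = S α r₂ r₂' := by
                rw [hSdef]
                rw [Finset.sum_comm]
                rw [Fintype.sum_prod_type]
                rw [Finset.sum_comm]
                refine Finset.sum_congr rfl fun j _ => ?_
                split_ifs with h
                · simp [ptraceMR1]
                · simp
              rw [Finset.sum_const, card_univ, nsmul_eq_mul]
              simp only [← Finset.mul_sum]
              rw [← Finset.sum_mul]
              rw [Finset.sum_boole, hS, hwdef]
              push_cast
              ring
      · rw [if_neg (by tauto)]
        simp [Prod.ext_iff, hj]
    · rw [if_neg (by tauto)]
      simp [Prod.ext_iff, hm]
  -- ## Part 2: norm estimates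
  have hFn0 : 0 ≤ frobeniusNorm (ptraceMR1 A) := Real.sqrt_nonneg _
  set v : Fin B → EuclideanSpace ℂ (R₂ × R₂) :=
    fun α => WithLp.toLp 2 (fun p : R₂ × R₂ => S α p.1 p.2) with hv
  set u : (J₁ × J₂) → EuclideanSpace ℂ (R₂ × R₂) :=
    fun j => WithLp.toLp 2 (fun p : R₂ × R₂ => ptraceMR1 A ((j, p.1)) ((j, p.2))) with hu
  have hnpos : ∀ α : Fin B, 0 < (Fintype.card {j : J₁ × J₂ // β j = α} : ℝ) := by
    intro α
    obtain ⟨j, hj⟩ := hβ α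
    have : Nonempty {j : J₁ × J₂ // β j = α} := ⟨⟨j, hj⟩⟩
    exact_mod_cast Fintype.card_pos
  have hvle : ∀ α : Fin B, ‖v α‖ ≤
      Real.sqrt (Fintype.card {j : J₁ × J₂ // β j = α} : ℝ) * frobeniusNorm (ptraceMR1 A) := by
    intro α
    have hvsum : v α = ∑ j ∈ Finset.univ.filter (fun j : J₁ × J₂ => β j = α), u j := by
      ext p
      rw [WithLp.ofLp_sum, Finset.sum_apply]
      simp only [hv, hu, hSdef, WithLp.ofLp_toLp]
      rw [Finset.sum_filter]
    have husq : ∑ j ∈ Finset.univ.filter (fun j : J₁ × J₂ => β j = α), ‖u j‖ ^ 2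
        ≤ frobeniusNorm (ptraceMR1 A) ^ 2 := by
      have : ∀ j : J₁ × J₂, ‖u j‖ ^ 2
          = ∑ p : R₂ × R₂, ‖ptraceMR1 A ((j, p.1)) ((j, p.2))‖ ^ 2 := by
        intro j
        rw [aux_normsq]
      rw [Finset.sum_congr rfl fun j _ => this j]
      exact aux_sum_diag_le (ptraceMR1 A) _
    calc ‖v α‖ = ‖∑ j ∈ Finset.univ.filter (fun j : J₁ × J₂ => β j = α), u j‖ := by
          rw [hvsum]
      _ ≤ Real.sqrt (Finset.univ.filter (fun j : J₁ × J₂ => β j = α)).card *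
            frobeniusNorm (ptraceMR1 A) :=
          aux_norm_sum_le _ _ _ hFn0 husq
      _ = Real.sqrt (Fintype.card {j : J₁ × J₂ // β j = α} : ℝ) *
            frobeniusNorm (ptraceMR1 A) := by
          rw [Fintype.card_subtype]
  have hw_nonneg : ∀ (α : Fin B) (j₂ : J₂), 0 ≤ w α j₂ := by
    intro α j₂
    rw [hwdef]
    have h1 : (0:ℝ) ≤ ((Fintype.card (M₁ × M₂) : ℝ) *
        (Fintype.card {j : J₁ × J₂ // β j = α} : ℝ))⁻¹ :=
      inv_nonneg.mpr (mul_nonneg (Nat.cast_nonneg _) (Nat.cast_nonneg _))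
    exact mul_nonneg (mul_nonneg h1 (Nat.cast_nonneg _)) (Nat.cast_nonneg _)
  have hwle : ∀ (α : Fin B) (j₂ : J₂), w α j₂ ≤
      (Fintype.card J₁ : ℝ) /
        ((Fintype.card M₂ : ℝ) * (Fintype.card {j : J₁ × J₂ // β j = α} : ℝ)) := by
    intro α j₂
    have hm1 : 0 < (Fintype.card M₁ : ℝ) := by exact_mod_cast Fintype.card_pos
    have hm2 : 0 < (Fintype.card M₂ : ℝ) := by exact_mod_cast Fintype.card_pos
    have hk : ((Finset.univ.filter fun b₁ : J₁ => β (b₁, j₂) = α).card : ℝ)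
        ≤ (Fintype.card J₁ : ℝ) := by
      have := Finset.card_filter_le (Finset.univ : Finset J₁) (fun b₁ => β (b₁, j₂) = α)
      rw [Finset.card_univ] at this
      exact_mod_cast this
    have hcard : (Fintype.card (M₁ × M₂) : ℝ)
        = (Fintype.card M₁ : ℝ) * (Fintype.card M₂ : ℝ) := by
      rw [Fintype.card_prod]; push_cast; ring
    rw [hwdef]
    simp only
    rw [hcard]
    have heq : (((Fintype.card M₁ : ℝ) * (Fintype.card M₂ : ℝ)) *
          (Fintype.card {j : J₁ × J₂ // β j = α} : ℝ))⁻¹ * (Fintype.card M₁ : ℝ) *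
          ((Finset.univ.filter fun b₁ : J₁ => β (b₁, j₂) = α).card : ℝ)
        = ((Finset.univ.filter fun b₁ : J₁ => β (b₁, j₂) = α).card : ℝ) /
          ((Fintype.card M₂ : ℝ) * (Fintype.card {j : J₁ × J₂ // β j = α} : ℝ)) := by
      have hn := hnpos α
      field_simp
    rw [heq]
    gcongr
  set Cb : ℝ := (Fintype.card J₁ : ℝ) / (Fintype.card M₂ : ℝ) *
      (∑ α : Fin B, 1 / Real.sqrt (Fintype.card {j : J₁ × J₂ // β j = α} : ℝ)) *
      frobeniusNorm (ptraceMR1 A) with hCb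
  have hsum_nonneg : 0 ≤ ∑ α : Fin B, 1 / Real.sqrt (Fintype.card {j : J₁ × J₂ // β j = α} : ℝ) :=
    Finset.sum_nonneg fun α _ => by positivity
  have hCb_nonneg : 0 ≤ Cb := by
    rw [hCb]
    exact mul_nonneg (mul_nonneg (div_nonneg (Nat.cast_nonneg _) (Nat.cast_nonneg _))
      hsum_nonneg) hFn0
  set g : J₂ → EuclideanSpace ℂ (R₂ × R₂) :=
    fun j₂ => ∑ α : Fin B, ((w α j₂ : ℝ) : ℂ) • v α with hg
  have hgle : ∀ j₂ : J₂, ‖g j₂‖ ≤ Cb := by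
    intro j₂
    calc ‖g j₂‖ ≤ ∑ α : Fin B, ‖((w α j₂ : ℝ) : ℂ) • v α‖ := norm_sum_le _ _
      _ = ∑ α : Fin B, w α j₂ * ‖v α‖ := by
          refine Finset.sum_congr rfl fun α _ => ?_
          rw [norm_smul, Complex.norm_of_nonneg (hw_nonneg α j₂)]
      _ ≤ ∑ α : Fin B, ((Fintype.card J₁ : ℝ) /
            ((Fintype.card M₂ : ℝ) * (Fintype.card {j : J₁ × J₂ // β j = α} : ℝ))) *
            (Real.sqrt (Fintype.card {j : J₁ × J₂ // β j = α} : ℝ) *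
              frobeniusNorm (ptraceMR1 A)) := by
          refine Finset.sum_le_sum fun α _ => ?_
          refine mul_le_mul (hwle α j₂) (hvle α) (norm_nonneg _) ?_
          exact div_nonneg (Nat.cast_nonneg _)
            (mul_nonneg (Nat.cast_nonneg _) (Nat.cast_nonneg _))
      _ = Cb := by
          rw [hCb, Finset.mul_sum, Finset.sum_mul]
          refine Finset.sum_congr rfl fun α _ => ?_
          have hpos := hnpos α
          have hs : Real.sqrt (Fintype.card {j : J₁ × J₂ // β j = α} : ℝ) *
              Real.sqrt (Fintype.card {j : J₁ × J₂ // β j = α} : ℝ)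
              = (Fintype.card {j : J₁ × J₂ // β j = α} : ℝ) :=
            Real.mul_self_sqrt hpos.le
          have hsne : Real.sqrt (Fintype.card {j : J₁ × J₂ // β j = α} : ℝ) ≠ 0 := by
            positivity
          have hm2 : (0:ℝ) < (Fintype.card M₂ : ℝ) := by exact_mod_cast Fintype.card_pos
          field_simp
          linear_combination (frobeniusNorm (ptraceMR1 A)) * hs
  have hφ : ∀ j₂ : J₂, ∑ r : R₂, ∑ r' : R₂,
      ‖∑ α : Fin B, ((w α j₂ : ℝ) : ℂ) * S α r r'‖ ^ 2 ≤ Cb ^ 2 := by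
    intro j₂
    have hgp : ∀ p : R₂ × R₂, g j₂ p = ∑ α : Fin B, ((w α j₂ : ℝ) : ℂ) * S α p.1 p.2 := by
      intro p
      simp only [hg]
      rw [WithLp.ofLp_sum, Finset.sum_apply]
      refine Finset.sum_congr rfl fun α _ => ?_
      rw [PiLp.smul_apply, smul_eq_mul, hv]
    have h1 : (∑ r : R₂, ∑ r' : R₂,
          ‖∑ α : Fin B, ((w α j₂ : ℝ) : ℂ) * S α r r'‖ ^ 2)
        = ‖g j₂‖ ^ 2 := by
      rw [aux_normsq (g j₂)]
      rw [Fintype.sum_prod_type (f := fun p : R₂ × R₂ => ‖g j₂ p‖ ^ 2)]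
      exact Finset.sum_congr rfl fun r _ => Finset.sum_congr rfl fun r' _ => by
        rw [hgp (r, r')]
    rw [h1]
    exact pow_le_pow_left₀ (norm_nonneg _) (hgle j₂) 2
  have hmain : frobeniusNorm (ptraceM1J1R1 CA) ≤
      Real.sqrt (Fintype.card M₂) * Real.sqrt (Fintype.card J₂) * Cb :=
    aux_frob_blockdiag (ptraceM1J1R1 CA)
      (fun j₂ r r' => ∑ α : Fin B, ((w α j₂ : ℝ) : ℂ) * S α r r')
      (fun m₂ m₂' j₂ j₂' r r' => hG m₂ m₂' j₂ j₂' r r') Cb hCb_nonneg hφ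
  refine hmain.trans (le_of_eq ?_)
  rw [hCb]
  simp only [one_div]
  have hm2 : (0:ℝ) < (Fintype.card M₂ : ℝ) := by exact_mod_cast Fintype.card_pos
  have hm2s : Real.sqrt (Fintype.card M₂ : ℝ) * Real.sqrt (Fintype.card M₂ : ℝ)
      = (Fintype.card M₂ : ℝ) := Real.mul_self_sqrt hm2.le
  have hm2sne : Real.sqrt (Fintype.card M₂ : ℝ) ≠ 0 := by positivity
  have hJ : Real.sqrt ((Fintype.card (J₁ × J₂) : ℝ) * (Fintype.card J₁ : ℝ))
      = (Fintype.card J₁ : ℝ) * Real.sqrt (Fintype.card J₂ : ℝ) := by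
    have : (Fintype.card (J₁ × J₂) : ℝ) * (Fintype.card J₁ : ℝ)
        = ((Fintype.card J₁ : ℝ)) ^ 2 * (Fintype.card J₂ : ℝ) := by
      rw [Fintype.card_prod]; push_cast; ring
    rw [this, Real.sqrt_mul (sq_nonneg _), Real.sqrt_sq (Nat.cast_nonneg _)]
  rw [hJ]
  field_simp
  linear_combination ((∑ α : Fin B, 1 / Real.sqrt (Fintype.card {j : J₁ × J₂ // β j = α} : ℝ)) *
    frobeniusNorm (ptraceMR1 A)) * hm2s
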